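/- For a complex of groups G(𝒴) over a simplicial complex Y and a simplex σ of Y, the assignment F_σ defined on the induced complex of groups over the block of σ — by (F_σ)_τ = ψ_{σ,τ} on local groups, F_σ(a) = 1 if t(a) = σ, and F_σ(a) = g_{b,a} otherwise (where b is the edge from t(a) to σ) — is a morphism from G(ℬ(σ)) to the group G_σ, i.e. it satisfies (F_σ)_{t(a)} ∘ ψ_a = Ad(F_σ(a)) ∘ (F_σ)_{i(a)} for every edge a of ℬ(σ), and (F_σ)_{t(b)}(g_{b,a}) F_σ(ba) = F_σ(b) F_σ(a) for every composable pair. -/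

import Mathlib

/-- A complex of groups over a simplicial scwol, encoded via the vertex set `V`
and the strict-face relation `r` (`r σ τ`: σ is a strict face of τ, edge from
τ to σ). -/
structure ComplexOfGroups (V : Type) (r : V → V → Prop) where
  G : V → GrpCat
  ψ : ∀ {σ τ : V}, r σ τ → (↥(G τ) →* ↥(G σ))
  ψ_inj : ∀ {σ τ : V} (h : r σ τ), Function.Injective (ψ h)
  tw : ∀ {σ τ υ : V}, r σ τ → r τ υ → ↥(G σ)
  compat : ∀ {σ τ υ : V} (h1 : r σ τ) (h2 : r τ υ) (h12 : r σ υ) (x : ↥(G υ)),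
    tw h1 h2 * ψ h12 x * (tw h1 h2)⁻¹ = ψ h1 (ψ h2 x)
  cocycle : ∀ {σ τ υ ρ : V} (h1 : r σ τ) (h2 : r τ υ) (h3 : r υ ρ)
      (h12 : r σ υ) (h23 : r τ ρ),
    ψ h1 (tw h2 h3) * tw h1 h23 = tw h1 h2 * tw h12 h3

/-- A morphism from a complex of groups to a group `H`. -/
structure MorphismToGroup {V : Type} {r : V → V → Prop}
    (C : ComplexOfGroups V r) (H : Type) [Group H] where
  F : ∀ v : V, ↥(C.G v) →* H
  Fa : ∀ {σ τ : V}, r σ τ → H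
  equiv : ∀ {σ τ : V} (h : r σ τ) (x : ↥(C.G τ)),
    F σ (C.ψ h x) = Fa h * F τ x * (Fa h)⁻¹
  compat : ∀ {σ τ υ : V} (h1 : r σ τ) (h2 : r τ υ) (h12 : r σ υ),
    F σ (C.tw h1 h2) * Fa h12 = Fa h1 * Fa h2

variable {V : Type} {r : V → V → Prop}

/-- The vertices of the block of σ: the simplices containing σ (including σ). -/
def BlockV (r : V → V → Prop) (σ : V) : Type := {τ : V // σ = τ ∨ r σ τ}

/-- The edges of the block: the edges of the ambient scwol between block
vertices. -/
def blockRel (r : V → V → Prop) (σ : V) : BlockV r σ → BlockV r σ → Prop :=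
  fun τ τ' => r τ.1 τ'.1

/-- The induced complex of groups over the block of σ (pullback of `C` under
the inclusion of the block in the ambient scwol). -/
def blockCoG (C : ComplexOfGroups V r) (σ : V) :
    ComplexOfGroups (BlockV r σ) (blockRel r σ) where
  G := fun τ => C.G τ.1
  ψ := fun h => C.ψ h
  ψ_inj := fun h => C.ψ_inj h
  tw := fun h1 h2 => C.tw h1 h2
  compat := fun h1 h2 h12 x => C.compat h1 h2 h12 x
  cocycle := fun h1 h2 h3 h12 h23 => C.cocycle h1 h2 h3 h12 h23

/-- Transport of local groups along an equality of vertices. -/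
def castHom (C : ComplexOfGroups V r) {v w : V} (e : v = w) :
    ↥(C.G v) →* ↥(C.G w) := by subst e; exact MonoidHom.id _

/-- The local components of the canonical morphism F_σ over the block:
ψ_{σ,τ}, where ψ_{σ,σ} = id. -/
noncomputable def psiFrom (C : ComplexOfGroups V r) (σ : V) {τ : V}
    (h : σ = τ ∨ r σ τ) : ↥(C.G τ) →* ↥(C.G σ) :=
  haveI := Classical.dec (σ = τ)
  if e : σ = τ then castHom C e.symm else C.ψ (h.resolve_left e)

/-- The edge components of the canonical morphism F_σ over the block:
F_σ(a) = 1 if t(a) = σ, and F_σ(a) = g_{b,a} otherwise, where b is the edge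
from t(a) to σ. -/
noncomputable def blockFedge (C : ComplexOfGroups V r) (σ : V)
    {τ τ' : BlockV r σ} (h : blockRel r σ τ τ') : ↥(C.G σ) :=
  haveI := Classical.dec (σ = τ.1)
  if e : σ = τ.1 then 1 else C.tw (τ.2.resolve_left e) h

lemma castHom_psi (C : ComplexOfGroups V r) {v w u : V} (e : v = w)
    (h : r v u) (h' : r w u) (x : ↥(C.G u)) :
    castHom C e (C.ψ h x) = C.ψ h' x := by subst e; rfl

lemma castHom_tw (C : ComplexOfGroups V r) {v u ρ w : V} (e : v = w)
    (h1 : r v u) (h2 : r u ρ) (h1' : r w u) :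
    castHom C e (C.tw h1 h2) = C.tw h1' h2 := by subst e; rfl

/-- the assignment F_σ—given on local groups by ψ_{σ,τ} and on
edges by F_σ(a) = 1 if t(a) = σ and F_σ(a) = g_{b,a} otherwise (b the edge
from t(a) to σ)—is a morphism from the induced complex of groups over the
block of σ to the group G_σ, i.e. it satisfies
(F_σ)_{t(a)} ∘ ψ_a = Ad(F_σ(a)) ∘ (F_σ)_{i(a)} for every edge a of the block
and (F_σ)_{t(b)}(g_{b,a}) F_σ(ba) = F_σ(b) F_σ(a) for every composable pair. -/
theorem block_morphism_exists (C : ComplexOfGroups V r) (σ : V)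
    (hirr : ∀ v : V, ¬ r v v)
    (htrans : ∀ {a b c : V}, r a b → r b c → r a c) :
    ∃ M : MorphismToGroup (blockCoG C σ) ↥(C.G σ),
      (∀ τ : BlockV r σ, M.F τ = psiFrom C σ τ.2) ∧
      (∀ (τ τ' : BlockV r σ) (h : blockRel r σ τ τ'),
        M.Fa h = blockFedge C σ h) := by
  refine ⟨⟨fun τ => psiFrom C σ τ.2, fun {τ τ'} h => blockFedge C σ h, ?_, ?_⟩,
    fun τ => rfl, fun τ τ' h => rfl⟩
  · intro τ τ' h x
    by_cases e : σ = τ.1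
    · have e' : σ ≠ τ'.1 := fun e2 => hirr σ (by
        have h' : r τ.1 τ'.1 := h
        rw [← e, ← e2] at h'; exact h')
      show psiFrom C σ τ.2 _ = blockFedge C σ h * psiFrom C σ τ'.2 x * _
      simp only [psiFrom, blockFedge, dif_pos e, dif_neg e']
      show castHom C e.symm (C.ψ h x) = 1 * C.ψ (τ'.2.resolve_left e') x * 1⁻¹
      exact (castHom_psi C e.symm h (τ'.2.resolve_left e') x).trans (by group)
    · have hσ := τ.2.resolve_left e
      have e' : σ ≠ τ'.1 := fun e2 => hirr σ (by
        have h' : r σ τ'.1 := htrans hσ h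
        rw [← e2] at h'; exact h')
      show psiFrom C σ τ.2 _ = blockFedge C σ h * psiFrom C σ τ'.2 x * _
      simp only [psiFrom, blockFedge, dif_neg e, dif_neg e']
      exact (C.compat hσ h (htrans hσ h) x).symm
  · intro τ τ' τ'' h1 h2 h12
    have e' : σ ≠ τ'.1 := fun e2 => hirr σ (by
      rcases τ.2 with e | hσ
      · have h' : r τ.1 τ'.1 := h1; rw [← e, ← e2] at h'; exact h'
      · have h' : r σ τ'.1 := htrans hσ h1; rw [← e2] at h'; exact h')
    have e'' : σ ≠ τ''.1 := fun e2 => hirr σ (by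
      have hστ' := τ'.2.resolve_left e'
      have h' : r σ τ''.1 := htrans hστ' h2
      rw [← e2] at h'; exact h')
    by_cases e : σ = τ.1
    · show psiFrom C σ τ.2 _ * blockFedge C σ h12 = blockFedge C σ h1 * blockFedge C σ h2
      simp only [psiFrom, blockFedge, dif_pos e, dif_neg e', dif_neg e'']
      show castHom C e.symm (C.tw h1 h2) * 1 = 1 * C.tw (τ'.2.resolve_left e') h2
      rw [castHom_tw C e.symm h1 h2 (τ'.2.resolve_left e')]; group
    · have hσ := τ.2.resolve_left e
      show psiFrom C σ τ.2 _ * blockFedge C σ h12 = blockFedge C σ h1 * blockFedge C σ h2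
      simp only [psiFrom, blockFedge, dif_neg e, dif_neg e', dif_neg e'']
      exact C.cocycle hσ h1 h2 (htrans hσ h1) h12
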